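/- The nonstandard face subgroup G^{36}_N = ⟨⋃_{i∈α_{36}}( Ȳ_i ∪ ⋃_{j∈α_{45}} Z̄^{j*}_{i,j} ∪ ⋃_{j∈α_3} Z̄^j_{i, j−|α_{12}|} )⟩ of Ker(Φ) is isomorphic, as a group, to ∏_{i∈α_{36}} G_i (that is, to G_{α_3} × G_{α_6}). -/

import Mathlib

namespace SB

/-- `cc n p` is the 0-based boundary of the `p`-th label sequence:
`cc n p = ⌈p·n/3⌉` for `p ≤ 3`, and `cc n p = n + ⌈(p-3)·n/3⌉` for `p ≥ 3`. -/
def cc (n p : ℕ) : ℕ := if p < 3 then (p * n + 2) / 3 else n + ((p - 3) * n + 2) / 3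

/-- The 0-based label sequence `α_{p+1}` (paper's `α_1,…,α_6` for `p = 0,…,5`)
as a finite set of coordinates in `Fin (2n)`. -/
def alphaF (n p : ℕ) : Finset (Fin (2 * n)) :=
  Finset.univ.filter (fun x => cc n p ≤ x.val ∧ x.val < cc n (p + 1))

/-- The 0-based label sequence `α_{t+1}` (for `t < 3`) as a finite set of
indices in `Fin n` (indexing the factors `A_j`). -/
def alphaN (n t : ℕ) : Finset (Fin n) :=
  Finset.univ.filter (fun x => cc n t ≤ x.val ∧ x.val < cc n (t + 1))

/-- Reduction of a natural number modulo `2n`, as an element of `Fin (2n)`. -/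
def idx {n : ℕ} (hn : 0 < n) (k : ℕ) : Fin (2 * n) := ⟨k % (2 * n), Nat.mod_lt _ (by omega)⟩

/-- Reduction of a natural number modulo `n`, as an element of `Fin n`
(this implements the paper's `j*`). -/
def idxN {n : ℕ} (hn : 0 < n) (k : ℕ) : Fin n := ⟨k % n, Nat.mod_lt _ hn⟩

/-- The set `Ȳ_i` of vectorized kernel generators: `y ∈ Y i` placed in
coordinate `i` with identity elsewhere. -/
def Ybar {n : ℕ} {G : Fin (2 * n) → Type} [∀ i, Group (G i)]
    (Y : ∀ i, Set (G i)) (i : Fin (2 * n)) : Set (∀ i', G i') :=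
  Pi.mulSingle i '' (Y i)

/-- The set `Z̄^j_{i,k}` of vectorized section generators: for `b ∈ A j`, the
element with `s j i b` in coordinate `i`, `s j k b⁻¹` in coordinate `k`, and
identity elsewhere. -/
def Zbar {n : ℕ} {A : Fin n → Type} [∀ j, CommGroup (A j)]
    {G : Fin (2 * n) → Type} [∀ i, Group (G i)]
    (s : ∀ (j : Fin n) (i : Fin (2 * n)), A j →* G i)
    (j : Fin n) (i k : Fin (2 * n)) : Set (∀ i', G i') :=
  Set.range (fun b : A j => Pi.mulSingle i (s j i b) * Pi.mulSingle k (s j k b⁻¹))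

/-! ### Auxiliary definitions for the proof -/

/-- The predicate singling out the "correction" coordinates. -/
abbrev Kpred (n : ℕ) (k : Fin (2 * n)) : Prop :=
  (n ≤ k.val ∧ k.val < n + cc n 2) ∨ k.val + cc n 2 < n

/-- The label attached to a correction coordinate. -/
def jmap (n : ℕ) (hn : 0 < n) (k : Fin (2 * n)) : Fin n :=
  if h : n ≤ k.val then ⟨k.val - n, by have := k.isLt; omega⟩
  else if h2 : k.val + cc n 2 < n then ⟨k.val + cc n 2, h2⟩ else ⟨0, hn⟩

theorem jmap_inj {n : ℕ} (hn : 0 < n) {k1 k2 : Fin (2 * n)}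
    (h1 : Kpred n k1) (h2 : Kpred n k2) (he : jmap n hn k1 = jmap n hn k2) : k1 = k2 := by
  have hv := congrArg Fin.val he
  have l1 := k1.isLt
  have l2 := k2.isLt
  apply Fin.ext
  unfold jmap at hv
  split_ifs at hv <;> simp only at hv <;> omega

section Aux

variable {n : ℕ} {A : Fin n → Type} [∀ j, CommGroup (A j)]
  {G : Fin (2 * n) → Type} [∀ i, Group (G i)]

/-- The "section matrix" endomorphism of `L = ∏ j, A j` attached to coordinate `i`. -/
def psiHom (φ : ∀ i, G i →* (∀ j, A j)) (s : ∀ (j : Fin n) (i : Fin (2 * n)), A j →* G i)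
    (i : Fin (2 * n)) : (∀ j, A j) →* (∀ j, A j) :=
  ∏ j' : Fin n, ((φ i).comp ((s j' i).comp (Pi.evalMonoidHom A j')))

theorem psiHom_single (φ : ∀ i, G i →* (∀ j, A j))
    (s : ∀ (j : Fin n) (i : Fin (2 * n)), A j →* G i)
    (i : Fin (2 * n)) (j : Fin n) (a : A j) :
    psiHom φ s i (Pi.mulSingle j a) = φ i (s j i a) := by
  classical
  rw [psiHom, MonoidHom.finset_prod_apply]
  rw [Fintype.prod_eq_single j]
  · simp
  · intro j' hj'
    simp [Pi.mulSingle_eq_of_ne hj']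

theorem psiHom_bijective [∀ j, Module.Finite ℤ (Additive (A j))]
    (φ : ∀ i, G i →* (∀ j, A j)) (s : ∀ (j : Fin n) (i : Fin (2 * n)), A j →* G i)
    (Y : ∀ i, Set (G i))
    (hφ : ∀ i, Function.Surjective (φ i))
    (hYker : ∀ i, ∀ y ∈ Y i, φ i y = 1)
    (hYgen : ∀ i, Subgroup.closure (Y i ∪ ⋃ j, Set.range (s j i)) = ⊤)
    (i : Fin (2 * n)) : Function.Bijective (psiHom φ s i) := by
  classical
  have hsurj : Function.Surjective (psiHom φ s i) := by
    have h1 : Subgroup.map (φ i) ⊤ = ⊤ := Subgroup.map_top_of_surjective _ (hφ i)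
    rw [← hYgen i, MonoidHom.map_closure] at h1
    have h2 : Subgroup.closure ((φ i) '' (Y i ∪ ⋃ j, Set.range (s j i)))
        ≤ (psiHom φ s i).range := by
      rw [Subgroup.closure_le]
      rintro x ⟨g, hg, rfl⟩
      rcases hg with hg | hg
      · rw [hYker i g hg]; exact one_mem _
      · simp only [Set.mem_iUnion, Set.mem_range] at hg
        obtain ⟨j, a, rfl⟩ := hg
        exact ⟨Pi.mulSingle j a, psiHom_single φ s i j a⟩
    intro x
    have hx : x ∈ (psiHom φ s i).range := h2 (h1.ge (Subgroup.mem_top x))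
    exact hx
  refine ⟨?_, hsurj⟩
  -- transport to a ℤ-linear endomorphism of a finite module
  let M := ∀ j, Additive (A j)
  let toA : M → (∀ j, A j) := fun x j => Additive.toMul (x j)
  let ofA : (∀ j, A j) → M := fun x j => Additive.ofMul (x j)
  have hAd : ∀ x y : M, toA (x + y) = toA x * toA y := fun _ _ => rfl
  let F : M →+ M := AddMonoidHom.mk' (fun x => ofA (psiHom φ s i (toA x)))
    (by
      intro x y
      show ofA (psiHom φ s i (toA (x + y))) = _
      rw [hAd, map_mul]
      rfl)
  have hFsurj : Function.Surjective F := by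
    intro x
    obtain ⟨y, hy⟩ := hsurj (toA x)
    exact ⟨ofA y, by
      show ofA (psiHom φ s i (toA (ofA y))) = x
      rw [show toA (ofA y) = y from rfl, hy]
      rfl⟩
  have hFinj : Function.Injective F :=
    OrzechProperty.injective_of_surjective_endomorphism F.toIntLinearMap hFsurj
  intro a b hab
  have : F (ofA a) = F (ofA b) := by
    show ofA (psiHom φ s i (toA (ofA a))) = ofA (psiHom φ s i (toA (ofA b)))
    rw [show toA (ofA a) = a from rfl, show toA (ofA b) = b from rfl, hab]
  exact congrArg toA (hFinj this)

end Aux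

theorem stmt_7
    (n : ℕ) (hn : 3 ≤ n)
    (A : Fin n → Type) [∀ j, CommGroup (A j)] [∀ j, Nontrivial (A j)]
    [∀ j, Module.Free ℤ (Additive (A j))] [∀ j, Module.Finite ℤ (Additive (A j))]
    (G : Fin (2 * n) → Type) [∀ i, Group (G i)]
    (φ : ∀ i, G i →* (∀ j, A j)) (hφ : ∀ i, Function.Surjective (φ i))
    (s : ∀ (j : Fin n) (i : Fin (2 * n)), A j →* G i)
    (hs : ∀ j i a, φ i (s j i a) j = a)
    (Φ : (∀ i, G i) →* (∀ j, A j)) (hΦ : ∀ g, Φ g = ∏ i, φ i (g i))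
    (Y : ∀ i, Set (G i)) (hYfin : ∀ i, (Y i).Finite)
    (hYker : ∀ i, ∀ y ∈ Y i, φ i y = 1)
    (hYgen : ∀ i, Subgroup.closure (Y i ∪ ⋃ j, Set.range (s j i)) = ⊤)
    :
    Nonempty
      (↥(Subgroup.closure (⋃ i ∈ (alphaF n 2 ∪ alphaF n 5),
            (Ybar Y i
              ∪ (⋃ j ∈ alphaF n 3 ∪ alphaF n 4, Zbar s (idxN (by omega : 0 < n) j.val) i j)
              ∪ ⋃ j ∈ alphaF n 2,
                  Zbar s (idxN (by omega : 0 < n) j.val) i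
                    (idx (by omega : 0 < n) (j.val - cc n 2)))))
        ≃* (∀ i : ↥(alphaF n 2 ∪ alphaF n 5), G i.1)) := by
  classical
  have hn0 : 0 < n := by omega
  -- arithmetic facts about the boundaries
  have c2 : cc n 2 = (2 * n + 2) / 3 := by norm_num [cc]
  have c3 : cc n 3 = n := by norm_num [cc]
  have c4 : cc n 4 = n + (n + 2) / 3 := by norm_num [cc]
  have c5 : cc n 5 = n + (2 * n + 2) / 3 := by norm_num [cc]
  have c6 : cc n 6 = 2 * n := by norm_num [cc]; omega
  have hcA : cc n 2 ≤ n := by omega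
  have hcB : n ≤ 2 * cc n 2 := by omega
  set S : Finset (Fin (2 * n)) := alphaF n 2 ∪ alphaF n 5 with hSdef
  have hS : ∀ x : Fin (2 * n), x ∈ S ↔
      (cc n 2 ≤ x.val ∧ x.val < n) ∨ (n + cc n 2 ≤ x.val ∧ x.val < 2 * n) := by
    intro x
    simp only [hSdef, alphaF, Finset.mem_union, Finset.mem_filter, Finset.mem_univ, true_and]
    rw [c3, c5, c6, c2]
  have hS34 : ∀ x : Fin (2 * n), x ∈ alphaF n 3 ∪ alphaF n 4 ↔
      n ≤ x.val ∧ x.val < n + cc n 2 := by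
    intro x
    simp only [alphaF, Finset.mem_union, Finset.mem_filter, Finset.mem_univ, true_and]
    rw [c3, c4, c5, c2]
    omega
  have hS2 : ∀ x : Fin (2 * n), x ∈ alphaF n 2 ↔ cc n 2 ≤ x.val ∧ x.val < n := by
    intro x
    simp only [alphaF, Finset.mem_filter, Finset.mem_univ, true_and]
    rw [c3]
  have hSK : ∀ k : Fin (2 * n), Kpred n k → k ∉ S := by
    intro k hk hmem
    rw [hS] at hmem
    rcases hk with hk | hk <;> omega
  -- the projection homomorphism
  let π : (∀ i, G i) →* (∀ i : ↥S, G i.1) := Pi.monoidHom fun i => Pi.evalMonoidHom G i.1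
  -- the bijective section-matrix endomorphisms and their inverses
  have hψbij : ∀ i, Function.Bijective (psiHom φ s i) :=
    fun i => psiHom_bijective φ s Y hφ hYker hYgen i
  let ψe : ∀ i : Fin (2 * n), (∀ j, A j) ≃* (∀ j, A j) :=
    fun i => MulEquiv.ofBijective (psiHom φ s i) (hψbij i)
  have hψinv : ∀ (i : Fin (2 * n)) (j : Fin n) (a : A j),
      (ψe i).symm (φ i (s j i a)) = Pi.mulSingle j a := by
    intro i j a
    rw [MulEquiv.symm_apply_eq]
    exact (psiHom_single φ s i j a).symm
  -- the correction homomorphisms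
  let lam : ∀ (j : Fin n), (∀ i : ↥S, G i.1) →* A j := fun j =>
    ∏ i : ↥S, (Pi.evalMonoidHom A j).comp
      (((ψe i.1).symm.toMonoidHom).comp
        ((φ i.1).comp (Pi.evalMonoidHom (fun i : ↥S => G i.1) i)))
  have hlam : ∀ (j : Fin n) (p : ∀ i : ↥S, G i.1),
      lam j p = ∏ i : ↥S, ((ψe i.1).symm (φ i.1 (p i))) j := by
    intro j p
    rw [show lam j = ∏ i : ↥S, (Pi.evalMonoidHom A j).comp
      (((ψe i.1).symm.toMonoidHom).comp
        ((φ i.1).comp (Pi.evalMonoidHom (fun i : ↥S => G i.1) i))) from rfl,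
      MonoidHom.finset_prod_apply]
    rfl
  -- the retraction homomorphism
  let Fm : (∀ i : ↥S, G i.1) →* (∀ i', G i') := Pi.monoidHom fun i' =>
    if hSm : i' ∈ S then Pi.evalMonoidHom (fun i : ↥S => G i.1) ⟨i', hSm⟩
    else if _hK : Kpred n i' then
      (s (jmap n hn0 i') i').comp (invMonoidHom.comp (lam (jmap n hn0 i')))
    else 1
  have hFm : ∀ (p : ∀ i : ↥S, G i.1) (i' : Fin (2 * n)), Fm p i' =
      if hSm : i' ∈ S then p ⟨i', hSm⟩
      else if Kpred n i' then s (jmap n hn0 i') i' ((lam (jmap n hn0 i') p)⁻¹)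
      else 1 := by
    intro p i'
    show (if hSm : i' ∈ S then Pi.evalMonoidHom (fun i : ↥S => G i.1) ⟨i', hSm⟩
      else if _hK : Kpred n i' then
        (s (jmap n hn0 i') i').comp (invMonoidHom.comp (lam (jmap n hn0 i')))
      else 1) p = _
    split_ifs with h1 h2 <;> rfl
  have hπ : ∀ (g : ∀ i, G i) (i : ↥S), π g i = g i.1 := fun _ _ => rfl
  -- values of Fm ∘ π on the Y-type generators
  have hFY : ∀ (i : Fin (2 * n)), i ∈ S → ∀ (y : G i), φ i y = 1 →
      Fm (π (Pi.mulSingle i y)) = Pi.mulSingle i y := by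
    intro i hi y hy
    funext i'
    rw [hFm]
    split_ifs with h1 h2
    · rfl
    · have hne : i' ≠ i := fun h => (hSK i' h2) (h ▸ hi)
      rw [Pi.mulSingle_eq_of_ne hne]
      have hl : lam (jmap n hn0 i') (π (Pi.mulSingle i y)) = 1 := by
        rw [hlam]
        apply Finset.prod_eq_one
        intro b _
        rw [hπ]
        obtain ⟨bv, hb⟩ := b
        simp only
        rcases eq_or_ne bv i with hbi | hbi
        · subst hbi
          rw [Pi.mulSingle_eq_same, hy, map_one]
          rfl
        · rw [Pi.mulSingle_eq_of_ne hbi, map_one, map_one]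
          rfl
      rw [hl, inv_one, map_one]
    · have hne : i' ≠ i := fun h => h1 (h ▸ hi)
      rw [Pi.mulSingle_eq_of_ne hne]
  -- values of Fm ∘ π on the Z-type generators
  have hFZ : ∀ (i : Fin (2 * n)), i ∈ S → ∀ (k : Fin (2 * n)), Kpred n k →
      ∀ (j : Fin n), jmap n hn0 k = j → ∀ (b : A j),
      Fm (π (Pi.mulSingle i (s j i b) * Pi.mulSingle k (s j k b⁻¹)))
        = Pi.mulSingle i (s j i b) * Pi.mulSingle k (s j k b⁻¹) := by
    intro i hi k hk j hj b
    have hkS : k ∉ S := hSK k hk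
    have hik : i ≠ k := fun h => hkS (h ▸ hi)
    set g := Pi.mulSingle i (s j i b) * Pi.mulSingle k (s j k b⁻¹) with hg
    have hgi : g i = s j i b := by
      rw [hg, Pi.mul_apply, Pi.mulSingle_eq_same, Pi.mulSingle_eq_of_ne hik, mul_one]
    have hgk : g k = s j k b⁻¹ := by
      rw [hg, Pi.mul_apply, Pi.mulSingle_eq_same, Pi.mulSingle_eq_of_ne (Ne.symm hik), one_mul]
    have hgo : ∀ m : Fin (2 * n), m ≠ i → m ≠ k → g m = 1 := by
      intro m hmi hmk
      rw [hg, Pi.mul_apply, Pi.mulSingle_eq_of_ne hmi, Pi.mulSingle_eq_of_ne hmk, one_mul]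
    funext i'
    rw [hFm]
    split_ifs with h1 h2
    · rfl
    · -- correction coordinate
      have hiS' : i' ∉ S := hSK i' h2
      have hprod : lam (jmap n hn0 i') (π g) =
          ((ψe i).symm (φ i (s j i b))) (jmap n hn0 i') := by
        rw [hlam, Fintype.prod_eq_single (⟨i, hi⟩ : ↥S)]
        · rw [hπ]
          simp only
          rw [hgi]
        · intro x hx
          have hxne : x.1 ≠ i := fun h => hx (Subtype.ext h)
          have hxk : x.1 ≠ k := fun h => hkS (h ▸ x.2)
          rw [hπ, hgo x.1 hxne hxk, map_one, map_one]
          rfl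
      rw [hψinv i j b] at hprod
      rcases eq_or_ne i' k with rfl | hik'
      · rw [hprod, hj, Pi.mulSingle_eq_same, hgk]
      · have hjj : jmap n hn0 i' ≠ j := by
          rw [← hj]
          exact fun hh => hik' (jmap_inj hn0 h2 hk hh)
        rw [hprod, Pi.mulSingle_eq_of_ne hjj, inv_one, map_one,
          hgo i' (fun h => h1 (h ▸ hi)) hik']
    · rw [hgo i' (fun h => h1 (h ▸ hi)) (fun h => h2 (h ▸ hk))]
  -- the generating set
  set X : Set (∀ i', G i') := ⋃ i ∈ (alphaF n 2 ∪ alphaF n 5),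
            (Ybar Y i
              ∪ (⋃ j ∈ alphaF n 3 ∪ alphaF n 4, Zbar s (idxN (by omega : 0 < n) j.val) i j)
              ∪ ⋃ j ∈ alphaF n 2,
                  Zbar s (idxN (by omega : 0 < n) j.val) i
                    (idx (by omega : 0 < n) (j.val - cc n 2))) with hX
  -- Fm ∘ π is the identity on the generators
  have hXelim : ∀ g ∈ X, Fm (π g) = g := by
    intro g hg
    rw [hX] at hg
    simp only [Set.mem_iUnion, Set.mem_union, Finset.mem_coe] at hg
    obtain ⟨i, hi, hg⟩ := hg
    have hiS : i ∈ S := hi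
    rcases hg with (hg | hg) | hg
    · obtain ⟨y, hy, rfl⟩ := hg
      exact hFY i hiS y (hYker i y hy)
    · obtain ⟨k, hk34, hg⟩ := hg
      obtain ⟨b, rfl⟩ := hg
      have hk' : n ≤ k.val ∧ k.val < n + cc n 2 := (hS34 k).mp hk34
      have hjm : jmap n hn0 k = idxN hn0 k.val := by
        apply Fin.ext
        have hkl := k.isLt
        rw [jmap, dif_pos hk'.1]
        show k.val - n = k.val % n
        rw [Nat.mod_eq_sub_mod hk'.1, Nat.mod_eq_of_lt (by omega)]
      exact hFZ i hiS k (Or.inl hk') (idxN hn0 k.val) hjm b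
    · obtain ⟨k2, hk2, hg⟩ := hg
      obtain ⟨b, rfl⟩ := hg
      have hk2' : cc n 2 ≤ k2.val ∧ k2.val < n := (hS2 k2).mp hk2
      have hkval : (idx hn0 (k2.val - cc n 2)).val = k2.val - cc n 2 := by
        show (k2.val - cc n 2) % (2 * n) = _
        exact Nat.mod_eq_of_lt (by omega)
      have hKp : Kpred n (idx hn0 (k2.val - cc n 2)) := by
        right
        rw [hkval]
        omega
      have hjm : jmap n hn0 (idx hn0 (k2.val - cc n 2)) = idxN hn0 k2.val := by
        apply Fin.ext
        rw [jmap, dif_neg (by rw [hkval]; omega), dif_pos (by rw [hkval]; omega)]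
        show (idx hn0 (k2.val - cc n 2)).val + cc n 2 = k2.val % n
        rw [hkval, Nat.mod_eq_of_lt hk2'.2]
        omega
      exact hFZ i hiS (idx hn0 (k2.val - cc n 2)) hKp (idxN hn0 k2.val) hjm b
  -- Fm ∘ π is the identity on the closure
  have hret : ∀ g ∈ Subgroup.closure X, Fm (π g) = g := by
    intro g hgm
    induction hgm using Subgroup.closure_induction with
    | mem x hx => exact hXelim x hx
    | one => rw [map_one, map_one]
    | mul x y _ _ hx hy => rw [map_mul, map_mul, hx, hy]
    | inv x _ hx => rw [map_inv, map_inv, hx]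
  -- single-coordinate elements land in the image
  have hsing : ∀ (i : ↥S) (x : G i.1) (i'' : ↥S),
      Pi.mulSingle i.1 x i''.1 = Pi.mulSingle (M := fun i : ↥S => G i.1) i x i'' := by
    intro i x i''
    rcases eq_or_ne i'' i with rfl | hne
    · rw [Pi.mulSingle_eq_same, Pi.mulSingle_eq_same]
    · rw [Pi.mulSingle_eq_of_ne (fun h => hne (Subtype.ext h)), Pi.mulSingle_eq_of_ne hne]
  have hπsing : ∀ (i : ↥S) (x : G i.1) (k : Fin (2 * n)), k ∉ S → ∀ w : G k,
      π (Pi.mulSingle i.1 x * Pi.mulSingle k w) = Pi.mulSingle i x := by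
    intro i x k hk w
    funext i''
    have hne : (i''.1 : Fin (2 * n)) ≠ k := fun h => hk (h ▸ i''.2)
    rw [hπ, Pi.mul_apply, Pi.mulSingle_eq_of_ne hne, mul_one, hsing]
  have hπsing' : ∀ (i : ↥S) (x : G i.1),
      π (Pi.mulSingle i.1 x) = Pi.mulSingle i x := by
    intro i x
    funext i''
    rw [hπ, hsing]
  -- surjectivity of π on the closure
  have hmaptop : Subgroup.map π (Subgroup.closure X) = ⊤ := by
    rw [eq_top_iff]
    intro p _
    apply Subgroup.pi_mem_of_mulSingle_mem
    intro i
    suffices hgen : ∀ x : G i.1, Pi.mulSingle i x ∈ Subgroup.map π (Subgroup.closure X) from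
      hgen (p i)
    intro x
    have hx : x ∈ Subgroup.closure (Y i.1 ∪ ⋃ j, Set.range (s j i.1)) := by
      rw [hYgen i.1]; exact Subgroup.mem_top x
    induction hx using Subgroup.closure_induction with
    | mem z hz =>
      rcases hz with hz | hz
      · refine ⟨Pi.mulSingle i.1 z, Subgroup.subset_closure ?_, hπsing' i z⟩
        rw [hX]
        simp only [Set.mem_iUnion, Set.mem_union, Finset.mem_coe]
        exact ⟨i.1, i.2, Or.inl (Or.inl ⟨z, hz, rfl⟩)⟩
      · simp only [Set.mem_iUnion, Set.mem_range] at hz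
        obtain ⟨j, a, rfl⟩ := hz
        by_cases hj2 : j.val < cc n 2
        · set k : Fin (2 * n) := ⟨j.val + n, by have := j.isLt; omega⟩ with hkdef
          have hkv : (k.val : ℕ) = j.val + n := rfl
          have hidx : idxN hn0 k.val = j := by
            apply Fin.ext
            show (j.val + n) % n = j.val
            rw [Nat.add_mod_right, Nat.mod_eq_of_lt j.isLt]
          have hkm : k ∈ alphaF n 3 ∪ alphaF n 4 := (hS34 k).mpr (by rw [hkv]; omega)
          have hkS : k ∉ S := hSK k (Or.inl (by rw [hkv]; omega))
          refine ⟨Pi.mulSingle i.1 (s j i.1 a) * Pi.mulSingle k (s j k a⁻¹),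
            Subgroup.subset_closure ?_, hπsing i (s j i.1 a) k hkS (s j k a⁻¹)⟩
          rw [hX]
          simp only [Set.mem_iUnion, Set.mem_union, Finset.mem_coe]
          refine ⟨i.1, i.2, Or.inl (Or.inr ⟨k, hkm, ?_⟩)⟩
          rw [show idxN (by omega : 0 < n) k.val = j from hidx]
          exact ⟨a, rfl⟩
        · set j' : Fin (2 * n) := ⟨j.val, by have := j.isLt; omega⟩ with hj'def
          have hj'v : (j'.val : ℕ) = j.val := rfl
          have hj'2 : j' ∈ alphaF n 2 := (hS2 j').mpr (by rw [hj'v]; exact ⟨by omega, j.isLt⟩)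
          have hkval : (idx hn0 (j'.val - cc n 2)).val = j.val - cc n 2 := by
            show (j'.val - cc n 2) % (2 * n) = _
            have := j.isLt
            rw [hj'v]
            exact Nat.mod_eq_of_lt (by omega)
          have hidx : idxN hn0 j'.val = j := by
            apply Fin.ext
            show j.val % n = j.val
            exact Nat.mod_eq_of_lt j.isLt
          have hkS : idx hn0 (j'.val - cc n 2) ∉ S :=
            hSK _ (Or.inr (by rw [hkval]; have := j.isLt; omega))
          refine ⟨Pi.mulSingle i.1 (s j i.1 a) *
              Pi.mulSingle (idx hn0 (j'.val - cc n 2)) (s j (idx hn0 (j'.val - cc n 2)) a⁻¹),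
            Subgroup.subset_closure ?_, hπsing i (s j i.1 a) _ hkS _⟩
          rw [hX]
          simp only [Set.mem_iUnion, Set.mem_union, Finset.mem_coe]
          refine ⟨i.1, i.2, Or.inr ⟨j', hj'2, ?_⟩⟩
          rw [show idxN (by omega : 0 < n) j'.val = j from hidx]
          exact ⟨a, rfl⟩
    | one =>
      rw [Pi.mulSingle_one]
      exact one_mem _
    | mul a b _ _ iha ihb =>
      rw [Pi.mulSingle_mul]
      exact mul_mem iha ihb
    | inv a _ iha =>
      rw [Pi.mulSingle_inv]
      exact inv_mem iha
  -- assemble the isomorphism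
  refine ⟨MulEquiv.ofBijective (π.comp (Subgroup.closure X).subtype) ⟨?_, ?_⟩⟩
  · intro a b hab
    apply Subtype.ext
    have ha := hret a.1 a.2
    have hb := hret b.1 b.2
    have : π a.1 = π b.1 := hab
    rw [← ha, ← hb, this]
  · intro p
    have hp : p ∈ Subgroup.map π (Subgroup.closure X) := by rw [hmaptop]; exact Subgroup.mem_top p
    obtain ⟨g, hgH, hgp⟩ := hp
    exact ⟨⟨g, hgH⟩, hgp⟩

end SB
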